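/- For every real 2×2 matrix A with trace A = 0, the trace of the matrix exponential exp(A) is at least -2. -/

import Mathlib

open Matrix

/-- For every real 2×2 matrix `A` with trace zero, the trace of `exp A` is at least `-2`. -/
theorem stmt_1 (A : Matrix (Fin 2) (Fin 2) ℝ) (hA : A.trace = 0) :
    -2 ≤ (NormedSpace.exp A).trace := by
  classical
  set d : ℝ := -A.det with hd
  -- Cayley–Hamilton for trace-zero 2×2 matrices
  have h2 : A * A = d • (1 : Matrix (Fin 2) (Fin 2) ℝ) := by
    have htr : A 0 0 + A 1 1 = 0 := by
      simpa [Matrix.trace_fin_two] using hA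
    ext i j
    fin_cases i <;> fin_cases j <;>
      simp only [Matrix.mul_apply, Fin.sum_univ_two, hd, Matrix.det_fin_two,
        Matrix.smul_apply, Matrix.one_apply, Fin.zero_eta, Fin.mk_one,
        if_true, if_false, eq_self_iff_true, Fin.one_eq_zero_iff, Fin.zero_eq_one_iff,
        Nat.succ_ne_self, ite_true, ite_false, one_ne_zero, zero_ne_one, smul_eq_mul,
        mul_one, mul_zero, Matrix.cons_val_zero, Matrix.cons_val_one, Matrix.head_cons]
    · linear_combination (A 0 0) * htr
    · linear_combination (A 0 1) * htr
    · linear_combination (A 1 0) * htr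
    · linear_combination (A 1 1) * htr
  have hpow_even : ∀ m : ℕ, A ^ (2 * m) = d ^ m • (1 : Matrix (Fin 2) (Fin 2) ℝ) := by
    intro m
    rw [pow_mul, pow_two, h2, smul_pow, one_pow]
  have htrace_even : ∀ m : ℕ, (A ^ (2 * m)).trace = 2 * d ^ m := by
    intro m
    rw [hpow_even m, Matrix.trace_smul, Matrix.trace_one]
    simp [mul_comm]
  have htrace_odd : ∀ m : ℕ, (A ^ (2 * m + 1)).trace = 0 := by
    intro m
    rw [pow_succ, hpow_even m, Matrix.smul_mul, one_mul, Matrix.trace_smul, hA, smul_zero]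
  -- exp as a HasSum
  letI : SeminormedRing (Matrix (Fin 2) (Fin 2) ℝ) := Matrix.linftyOpSemiNormedRing
  letI : NormedRing (Matrix (Fin 2) (Fin 2) ℝ) := Matrix.linftyOpNormedRing
  letI : NormedAlgebra ℝ (Matrix (Fin 2) (Fin 2) ℝ) := Matrix.linftyOpNormedAlgebra
  have hsum : HasSum (fun n : ℕ => ((n.factorial : ℝ)⁻¹) • A ^ n) (NormedSpace.exp A) := by
    rw [NormedSpace.exp_eq_tsum (𝕂 := ℝ)]
    exact (NormedSpace.expSeries_summable' (𝕂 := ℝ) A).hasSum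
  -- push the (continuous, linear) trace through the sum
  have htrace_cont : Continuous (fun M : Matrix (Fin 2) (Fin 2) ℝ => M.trace) :=
    (Matrix.traceLinearMap (Fin 2) ℝ ℝ).continuous_of_finiteDimensional
  have hsum' : HasSum (fun n : ℕ => (((n.factorial : ℝ)⁻¹) • A ^ n).trace)
      (NormedSpace.exp A).trace :=
    hsum.map (Matrix.traceLinearMap (Fin 2) ℝ ℝ).toAddMonoidHom htrace_cont
  have hg : HasSum (fun n : ℕ => ((n.factorial : ℝ)⁻¹) * (A ^ n).trace)
      (NormedSpace.exp A).trace := by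
    simpa [Matrix.trace_smul, smul_eq_mul] using hsum'
  rcases le_or_gt 0 d with hd0 | hd0
  · -- nonnegative case: every term is nonnegative
    have : (0 : ℝ) ≤ (NormedSpace.exp A).trace := by
      refine hg.nonneg fun n => ?_
      rcases Nat.even_or_odd n with ⟨m, hm⟩ | ⟨m, hm⟩
      · rw [hm, ← two_mul, htrace_even]
        positivity
      · rw [hm, htrace_odd]
        simp
    linarith
  · -- negative case: sum is 2 * cos √(-d)
    set x : ℝ := Real.sqrt (-d) with hx
    have hx2 : x ^ 2 = -d := Real.sq_sqrt (by linarith)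
    have hdm : ∀ m : ℕ, d ^ m = (-1) ^ m * x ^ (2 * m) := by
      intro m
      have hdx : d = -(x ^ 2) := by rw [hx2]; ring
      rw [hdx, neg_pow, pow_mul]
    have hcos : HasSum (fun m : ℕ => ((2*m).factorial : ℝ)⁻¹ * (A ^ (2 * m)).trace)
        (2 * Real.cos x) := by
      have := (Real.hasSum_cos x).mul_left 2
      convert this using 2 with m
      · rfl
      rw [htrace_even, hdm]
      field_simp
    have hodd : HasSum (fun m : ℕ => ((2*m+1).factorial : ℝ)⁻¹ * (A ^ (2 * m + 1)).trace)
        (0 : ℝ) := by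
      have hfun : (fun m : ℕ => ((2*m+1).factorial : ℝ)⁻¹ * (A ^ (2 * m + 1)).trace)
          = fun _ => (0 : ℝ) := by
        funext m
        rw [htrace_odd]
        ring
      rw [hfun]
      exact hasSum_zero
    have htotal : HasSum (fun n : ℕ => ((n.factorial : ℝ)⁻¹) * (A ^ n).trace)
        (2 * Real.cos x + 0) :=
      HasSum.even_add_odd (f := fun n : ℕ => ((n.factorial : ℝ)⁻¹) * (A ^ n).trace) hcos hodd
    have heq : (NormedSpace.exp A).trace = 2 * Real.cos x := by
      have := hg.unique htotal
      linarith
    rw [heq]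
    nlinarith [Real.neg_one_le_cos x]
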